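/- Let d, n ≥ 1, and let I ⊆ ℝ be an open interval. Let R : I → ℝ^{d×d} and T : I → ℝ^d be differentiable with R(t) invertible for every t ∈ I, let A : I → ℝ^{d×d} and τ : I → ℝ^d be functions, and let v : I × ℝ^d → ℝ^d. Suppose that for all t ∈ I: R'(t) = A(t) R(t), T'(t) = A(t) T(t) + τ(t), and that q_i : I → ℝ^d (i = 1,…,n) are differentiable with q_i'(t) = A(t) q_i(t) + τ(t) + v(t, q_i(t)). Define q̃_i(t) = R(t)⁻¹ ( q_i(t) − T(t) ). Then each q̃_i is differentiable on I and satisfies q̃_i'(t) = R(t)⁻¹ v(t, R(t) q̃_i(t) + T(t)) for all t ∈ I. -/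

import Mathlib

lemma det_diff' {d : ℕ} {M : ℝ → Matrix (Fin d) (Fin d) ℝ} {t : ℝ}
    (h : ∀ i j, DifferentiableAt ℝ (fun s => M s i j) t) :
    DifferentiableAt ℝ (fun s => (M s).det) t := by
  simp only [Matrix.det_apply']
  exact DifferentiableAt.fun_sum fun σ _ =>
    (differentiableAt_const _).mul (DifferentiableAt.fun_finsetProd fun i _ => h (σ i) i)

lemma inv_entry_diff' {d : ℕ} {M : ℝ → Matrix (Fin d) (Fin d) ℝ} {t : ℝ} {U : Set ℝ}
    (hU : U ∈ nhds t) (hinv : ∀ s ∈ U, IsUnit (M s))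
    (h : ∀ i j, DifferentiableAt ℝ (fun s => M s i j) t) (j k : Fin d) :
    DifferentiableAt ℝ (fun s => (M s)⁻¹ j k) t := by
  have hadj : DifferentiableAt ℝ (fun s => (M s).adjugate j k) t := by
    simp only [Matrix.adjugate_apply]
    apply det_diff'
    intro p q
    by_cases hp : p = k
    · simp [Matrix.updateRow_apply, hp]
    · simp only [Matrix.updateRow_apply, hp, if_false]
      exact h p q
  have hdetne : ∀ s ∈ U, (M s).det ≠ 0 := fun s hs =>
    (Matrix.isUnit_iff_isUnit_det (M s)).1 (hinv s hs) |>.ne_zero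
  have ht : t ∈ U := mem_of_mem_nhds hU
  have heq : (fun s => (M s)⁻¹ j k) =ᶠ[nhds t] fun s => ((M s).det)⁻¹ * (M s).adjugate j k := by
    filter_upwards [hU] with s hs
    rw [Matrix.inv_def, Ring.inverse_eq_inv']
    simp [Matrix.smul_apply, smul_eq_mul]
  exact (DifferentiableAt.mul ((det_diff' h).inv (hdetne t ht)) hadj).congr_of_eventuallyEq heq



open Matrix

/-- The change of variable `q̃ = R⁻¹(q − T)` removes the contribution of the rigid motion
`(R,T)` from the trajectory of landmarks deformed jointly by an infinitesimal rigid motion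
`(A(t), τ(t))` and a time-dependent vector field `v(t,·)`: the transformed landmarks satisfy
`q̃ᵢ'(t) = R(t)⁻¹ v(t, R(t) q̃ᵢ(t) + T(t))`. -/
theorem decoupled_dynamic {d n : ℕ} (hd : 1 ≤ d) (hn : 1 ≤ n) (a b : ℝ)
    (R : ℝ → Matrix (Fin d) (Fin d) ℝ) (T : ℝ → (Fin d → ℝ))
    (A : ℝ → Matrix (Fin d) (Fin d) ℝ) (τ : ℝ → (Fin d → ℝ))
    (v : ℝ → (Fin d → ℝ) → (Fin d → ℝ))
    (q : Fin n → ℝ → (Fin d → ℝ))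
    (hRinv : ∀ t ∈ Set.Ioo a b, IsUnit (R t))
    (hR : ∀ t ∈ Set.Ioo a b, ∀ i j, HasDerivAt (fun s => R s i j) ((A t * R t) i j) t)
    (hT : ∀ t ∈ Set.Ioo a b, HasDerivAt T ((A t).mulVec (T t) + τ t) t)
    (hq : ∀ t ∈ Set.Ioo a b, ∀ i,
      HasDerivAt (q i) ((A t).mulVec (q i t) + τ t + v t (q i t)) t) :
    ∀ t ∈ Set.Ioo a b, ∀ i,
      HasDerivAt (fun s => (R s)⁻¹.mulVec (q i s - T s))
        ((R t)⁻¹.mulVec (v t ((R t).mulVec ((R t)⁻¹.mulVec (q i t - T t)) + T t))) t := by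
  intro t ht i
  have hU : Set.Ioo a b ∈ nhds t := isOpen_Ioo.mem_nhds ht
  have hdiff : ∀ j k, DifferentiableAt ℝ (fun s => (R s)⁻¹ j k) t :=
    inv_entry_diff' hU hRinv (fun i j => (hR t ht i j).differentiableAt)
  set B : Matrix (Fin d) (Fin d) ℝ := Matrix.of fun j k => deriv (fun s => (R s)⁻¹ j k) t with hBdef
  have hB : ∀ j k, HasDerivAt (fun s => (R s)⁻¹ j k) (B j k) t := fun j k =>
    (hdiff j k).hasDerivAt
  have hRu := (Matrix.isUnit_iff_isUnit_det _).1 (hRinv t ht)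
  have key : B * R t + (R t)⁻¹ * (A t * R t) = 0 := by
    ext j k
    have h1 : HasDerivAt (fun s => ∑ k', (R s)⁻¹ j k' * R s k' k)
        ((B * R t + (R t)⁻¹ * (A t * R t)) j k) t := by
      rw [Matrix.add_apply, Matrix.mul_apply, Matrix.mul_apply, ← Finset.sum_add_distrib]
      exact HasDerivAt.fun_sum fun k' _ => (hB j k').mul (hR t ht k' k)
    have h2 : (fun _ : ℝ => (1 : Matrix (Fin d) (Fin d) ℝ) j k) =ᶠ[nhds t]
        (fun s => ∑ k', (R s)⁻¹ j k' * R s k' k) := by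
      filter_upwards [hU] with s hs
      rw [← Matrix.mul_apply, Matrix.nonsing_inv_mul _ ((Matrix.isUnit_iff_isUnit_det _).1 (hRinv s hs))]
    have h0 : HasDerivAt (fun s => ∑ k', (R s)⁻¹ j k' * R s k' k) (0 : ℝ) t :=
      (hasDerivAt_const t _).congr_of_eventuallyEq h2.symm
    have := h0.unique h1
    simpa using this.symm
  have hBval : B = -((R t)⁻¹ * A t) := by
    have h4 : B * R t = -((R t)⁻¹ * (A t * R t)) := by
      rw [eq_neg_iff_add_eq_zero]; exact key
    calc B = B * R t * (R t)⁻¹ := by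
          rw [Matrix.mul_assoc, Matrix.mul_nonsing_inv _ hRu, Matrix.mul_one]
      _ = -((R t)⁻¹ * (A t * R t)) * (R t)⁻¹ := by rw [h4]
      _ = -((R t)⁻¹ * A t) := by
          rw [Matrix.neg_mul, ← Matrix.mul_assoc, Matrix.mul_assoc ((R t)⁻¹ * A t),
            Matrix.mul_nonsing_inv _ hRu, Matrix.mul_one]
  have harg : (R t).mulVec ((R t)⁻¹.mulVec (q i t - T t)) + T t = q i t := by
    rw [Matrix.mulVec_mulVec, Matrix.mul_nonsing_inv _ hRu, Matrix.one_mulVec, sub_add_cancel]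
  rw [harg]
  rw [hasDerivAt_pi]
  intro j
  have hTj := hasDerivAt_pi.1 (hT t ht)
  have hqj := hasDerivAt_pi.1 (hq t ht i)
  have h5 : HasDerivAt (fun s => ∑ k, (R s)⁻¹ j k * (q i s k - T s k))
      (∑ k, (B j k * (q i t k - T t k) + (R t)⁻¹ j k *
        (((A t).mulVec (q i t) + τ t + v t (q i t)) k - ((A t).mulVec (T t) + τ t) k))) t :=
    HasDerivAt.fun_sum fun k _ => (hB j k).mul ((hqj k).sub (hTj k))
  have h6 : (fun s => (R s)⁻¹.mulVec (q i s - T s) j)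
      = fun s => ∑ k, (R s)⁻¹ j k * (q i s k - T s k) := by
    funext s
    simp [Matrix.mulVec, dotProduct]
  rw [show (fun s => (R s)⁻¹.mulVec (q i s - T s) j)
      = fun s => ∑ k, (R s)⁻¹ j k * (q i s k - T s k) from h6]
  refine h5.congr_deriv ?_
  have hsum : (∑ k, (B j k * (q i t k - T t k) + (R t)⁻¹ j k *
        (((A t).mulVec (q i t) + τ t + v t (q i t)) k - ((A t).mulVec (T t) + τ t) k)))
      = (B.mulVec (q i t - T t) + (R t)⁻¹.mulVec ((A t).mulVec (q i t - T t))
          + (R t)⁻¹.mulVec (v t (q i t))) j := by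
    simp only [Matrix.mulVec, dotProduct, Pi.add_apply, Pi.sub_apply,
      ← Finset.sum_add_distrib]
    apply Finset.sum_congr rfl
    intro k _
    have : (A t).mulVec (q i t - T t) k = (A t).mulVec (q i t) k - (A t).mulVec (T t) k := by
      rw [Matrix.mulVec_sub, Pi.sub_apply]
    simp only [Matrix.mulVec, dotProduct, Pi.sub_apply] at this
    rw [this]
    ring
  rw [hsum, hBval]
  simp [Matrix.neg_mulVec, Matrix.mulVec_mulVec]
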